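/- In the virtual-disclosure state for F's reasoning, the conclusion 'w = fail with certainty' fails: for θ = √(1/3)·|0⟩⊗|fail̄⟩⊗(|ok⟩+|fail⟩) + √(1/12)·|1⟩⊗(|ok̄⟩−|fail̄⟩)⊗(|ok⟩−|fail⟩), the conditional probability of outcome ok on the third system given outcome 1 on the first equals 1/2: (|⟨1⊗ok̄⊗ok, θ⟩|² + |⟨1⊗fail̄⊗ok, θ⟩|²) / (∑_{b,c} |⟨1⊗b⊗c, θ⟩|²) = 1/2, where b ranges over {ok̄, fail̄} and c over {ok, fail}. -/

import Mathlib

noncomputable section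
open scoped InnerProductSpace
abbrev Q : Type := EuclideanSpace ℂ (Fin 2)
abbrev QQQ : Type := EuclideanSpace ℂ (Fin 2 × Fin 2 × Fin 2)
/-- standard basis of ℂ² -/
def e (i : Fin 2) : Q := EuclideanSpace.single i 1
/-- tensor product of three qubit vectors -/
def tp3 (a b c : Q) : QQQ := WithLp.toLp 2 (fun p : Fin 2 × Fin 2 × Fin 2 => a p.1 * b p.2.1 * c p.2.2)

lemma inner_tp3 (a b c a' b' c' : Q) :
    ⟪tp3 a b c, tp3 a' b' c'⟫_ℂ = ⟪a,a'⟫_ℂ * ⟪b,b'⟫_ℂ * ⟪c,c'⟫_ℂ := by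
  simp only [tp3, PiLp.inner_apply, RCLike.inner_apply, map_mul,
    Fintype.sum_prod_type, ← Finset.sum_mul, ← Finset.mul_sum]
  simp only [Fin.sum_univ_two]
  ring

lemma inner_e : ∀ i j : Fin 2, ⟪e i, e j⟫_ℂ = if i = j then 1 else 0 := by
  intro i j
  simp [e, EuclideanSpace.inner_single_left, EuclideanSpace.single_apply, eq_comm]

theorem conditional_ok_given_disclosure_half (okb failb okv failv : Q)
    (h1 : Orthonormal ℂ ![okb, failb]) (h2 : Orthonormal ℂ ![okv, failv]) :
    let θ : QQQ := (Real.sqrt (1/3) : ℂ) • tp3 (e 0) failb (okv + failv) +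
      (Real.sqrt (1/12) : ℂ) • tp3 (e 1) (okb - failb) (okv - failv)
    (‖⟪tp3 (e 1) okb okv, θ⟫_ℂ‖ ^ 2 + ‖⟪tp3 (e 1) failb okv, θ⟫_ℂ‖ ^ 2) /
      (‖⟪tp3 (e 1) okb okv, θ⟫_ℂ‖ ^ 2 + ‖⟪tp3 (e 1) okb failv, θ⟫_ℂ‖ ^ 2 +
        ‖⟪tp3 (e 1) failb okv, θ⟫_ℂ‖ ^ 2 + ‖⟪tp3 (e 1) failb failv, θ⟫_ℂ‖ ^ 2) = 1 / 2 := by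
  intro θ
  have H1 := orthonormal_iff_ite.mp h1
  have H2 := orthonormal_iff_ite.mp h2
  have hbb : ⟪okb, okb⟫_ℂ = 1 := by simpa using H1 0 0
  have hbf : ⟪okb, failb⟫_ℂ = 0 := by simpa using H1 0 1
  have hfb : ⟪failb, okb⟫_ℂ = 0 := by simpa using H1 1 0
  have hff : ⟪failb, failb⟫_ℂ = 1 := by simpa using H1 1 1
  have kbb : ⟪okv, okv⟫_ℂ = 1 := by simpa using H2 0 0
  have kbf : ⟪okv, failv⟫_ℂ = 0 := by simpa using H2 0 1
  have kfb : ⟪failv, okv⟫_ℂ = 0 := by simpa using H2 1 0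
  have kff : ⟪failv, failv⟫_ℂ = 1 := by simpa using H2 1 1
  have e10 : ⟪e 1, e 0⟫_ℂ = 0 := by simpa using inner_e 1 0
  have e11 : ⟪e 1, e 1⟫_ℂ = 1 := by simpa using inner_e 1 1
  have expand : ∀ b v : Q, ⟪tp3 (e 1) b v, θ⟫_ℂ =
      (Real.sqrt (1/12) : ℂ) * (⟪b, okb⟫_ℂ - ⟪b, failb⟫_ℂ) * (⟪v, okv⟫_ℂ - ⟪v, failv⟫_ℂ) := by
    intro b v
    show ⟪tp3 (e 1) b v, (Real.sqrt (1/3) : ℂ) • tp3 (e 0) failb (okv + failv) +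
      (Real.sqrt (1/12) : ℂ) • tp3 (e 1) (okb - failb) (okv - failv)⟫_ℂ = _
    rw [inner_add_right, inner_smul_right, inner_smul_right, inner_tp3, inner_tp3,
      e10, e11, inner_sub_right b, inner_sub_right v]
    ring
  have n12 : ‖(Real.sqrt (1/12) : ℂ)‖ ^ 2 = 1/12 := by
    rw [Complex.norm_real, Real.norm_eq_abs, abs_of_nonneg (Real.sqrt_nonneg _),
      Real.sq_sqrt (by norm_num : (1:ℝ)/12 ≥ 0)]
  have A : ⟪tp3 (e 1) okb okv, θ⟫_ℂ = (Real.sqrt (1/12) : ℂ) := by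
    rw [expand, hbb, hbf, kbb, kbf]; ring
  have B : ⟪tp3 (e 1) okb failv, θ⟫_ℂ = -(Real.sqrt (1/12) : ℂ) := by
    rw [expand, hbb, hbf, kfb, kff]; ring
  have C : ⟪tp3 (e 1) failb okv, θ⟫_ℂ = -(Real.sqrt (1/12) : ℂ) := by
    rw [expand, hfb, hff, kbb, kbf]; ring
  have D : ⟪tp3 (e 1) failb failv, θ⟫_ℂ = (Real.sqrt (1/12) : ℂ) := by
    rw [expand, hfb, hff, kfb, kff]; ring
  rw [A, B, C, D, norm_neg, n12]
  norm_num
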